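/- Let β ∈ (0,1) and let R be a real number with 0 < R < 1 - β. Then there exists a unique ρ > 0 satisfying E_0(ρ) = ρ·R, i.e., R = E_0(ρ)/ρ. -/

import Mathlib

open Real Set

/-- Base-2 Gallager function of the binary erasure channel with erasure probability `β`. -/
noncomputable def gallagerE0 (β ρ : ℝ) : ℝ := -Real.logb 2 (β + (1 - β) * 2 ^ (-ρ))

/-- For any rate `0 < R < 1-β` there is a unique `ρ > 0` with `E_0(ρ) = ρ R`,
i.e. `R = E_0(ρ)/ρ`. -/
theorem unique_rho_solution (β R : ℝ) (hβ : β ∈ Set.Ioo (0 : ℝ) 1)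
    (hR : 0 < R) (hR' : R < 1 - β) :
    ∃! ρ : ℝ, 0 < ρ ∧ gallagerE0 β ρ = ρ * R := by
  obtain ⟨hβ0, hβ1⟩ := hβ
  have h1β : (0:ℝ) < 1 - β := by linarith
  have hR1 : R < 1 := by linarith
  set φ : ℝ → ℝ := fun t => t ^ R - ((1 - β) * t + β) with hφdef
  -- strict concavity of φ on [0,∞)
  have h2 : ConvexOn ℝ (Ici (0:ℝ)) (fun t => (1 - β) * t + β) := by
    refine ⟨convex_Ici 0, fun x _ y _ a b ha hb hab => le_of_eq ?_⟩
    simp only [smul_eq_mul]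
    ring_nf
    linear_combination (-β) * hab
  have hconc : StrictConcaveOn ℝ (Ici (0:ℝ)) φ :=
    (Real.strictConcaveOn_rpow hR hR1).sub_convexOn h2
  have hφ1 : φ 1 = 0 := by simp [hφdef]
  -- at most one root of φ in (0,1)
  have key2 : ∀ x y : ℝ, x ∈ Ioo (0:ℝ) 1 → y ∈ Ioo (0:ℝ) 1 → φ x = 0 → φ y = 0 →
      x < y → False := by
    intro x y hx hy hφx hφy hxy
    have h1x : 0 < 1 - x := by linarith [hx.2]
    have ha : 0 < (1 - y) / (1 - x) := div_pos (by linarith [hy.2]) h1x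
    have hb : 0 < (y - x) / (1 - x) := div_pos (by linarith) h1x
    have hab : (1 - y) / (1 - x) + (y - x) / (1 - x) = 1 := by field_simp; ring
    have hxne1 : x ≠ (1:ℝ) := by linarith [hy.2]
    have hlt := hconc.2 (mem_Ici.2 hx.1.le) (mem_Ici.2 zero_le_one) hxne1 ha hb hab
    have hsum : (1 - y) / (1 - x) * x + (y - x) / (1 - x) * 1 = y := by
      field_simp; ring
    rw [smul_eq_mul, smul_eq_mul, smul_eq_mul, smul_eq_mul, hsum, hφx, hφ1, hφy] at hlt
    simp at hlt
  -- a point c ∈ (0,1) with φ c > 0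
  set c : ℝ := (R / (1 - β) + 1) / 2 with hc
  have hq0 : 0 < R / (1 - β) := div_pos hR h1β
  have hq1 : R / (1 - β) < 1 := (div_lt_one h1β).2 hR'
  have hcpos : 0 < c := by rw [hc]; linarith
  have hc1 : c < 1 := by rw [hc]; linarith
  have hcR : R / (1 - β) < c := by rw [hc]; linarith
  have hclt : R < (1 - β) * c := by
    rw [div_lt_iff₀ h1β] at hcR; linarith
  have hφc : 0 < φ c := by
    have hcne1 : (1:ℝ)/c ≠ 1 := by
      intro h
      have : c = 1 := by field_simp at h; linarith
      linarith
    have hlog := Real.log_lt_sub_one_of_pos (by positivity : (0:ℝ) < 1/c) hcne1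
    rw [one_div, Real.log_inv] at hlog
    -- hlog : -log c < 1/c - 1
    have h3 : R * (-Real.log c) < R * (c⁻¹ - 1) := mul_lt_mul_of_pos_left hlog hR
    have h4 : R * (c⁻¹ - 1) < (1 - β) * (1 - c) := by
      rw [mul_sub, mul_one, ← div_eq_mul_inv, div_sub' hcpos.ne', div_lt_iff₀ hcpos]
      nlinarith [hclt, sub_pos.2 hc1]
    have key : -(R * Real.log c) < (1 - β) * (1 - c) := by
      rw [← mul_neg]; linarith
    have e := Real.add_one_le_exp (R * Real.log c)
    have hcr : c ^ R = Real.exp (Real.log c * R) := Real.rpow_def_of_pos hcpos R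
    simp only [hφdef]
    rw [hcr, mul_comm (Real.log c) R]
    nlinarith [e, key]
  -- existence of a root via IVT
  have hcont : ContinuousOn φ (Icc 0 c) := by
    apply ContinuousOn.sub
    · exact continuousOn_id.rpow_const (fun x _ => Or.inr hR.le)
    · fun_prop
  have hφ0 : φ 0 = -β := by simp [hφdef, Real.zero_rpow hR.ne']
  have hmem : (0:ℝ) ∈ Icc (φ 0) (φ c) := ⟨by rw [hφ0]; linarith, hφc.le⟩
  obtain ⟨t, htmem, htzero⟩ := intermediate_value_Icc hcpos.le hcont hmem
  have ht0 : 0 < t := by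
    rcases htmem.1.lt_or_eq with h | h
    · exact h
    · exfalso; rw [← h, hφ0] at htzero; linarith
  have htIoo : t ∈ Ioo (0:ℝ) 1 := ⟨ht0, lt_of_le_of_lt htmem.2 hc1⟩
  -- uniqueness of the root
  have uniq : ∀ x ∈ Ioo (0:ℝ) 1, φ x = 0 → x = t := by
    intro x hx hφx
    rcases lt_trichotomy x t with h | h | h
    · exact absurd (key2 x t hx htIoo hφx htzero h) (not_false)
    · exact h
    · exact absurd (key2 t x htIoo hx htzero hφx h) (not_false)
  -- translation between ρ and t = 2^(-ρ)
  have h12 : (1:ℝ) < 2 := one_lt_two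
  have hequiv : ∀ ρ : ℝ, 0 < ρ → (gallagerE0 β ρ = ρ * R ↔ φ ((2:ℝ) ^ (-ρ)) = 0) := by
    intro ρ hρ
    have ht0' : (0:ℝ) < (2:ℝ) ^ (-ρ) := Real.rpow_pos_of_pos two_pos _
    have harg : 0 < β + (1 - β) * (2:ℝ) ^ (-ρ) := by positivity
    have hlogt : Real.logb 2 ((2:ℝ) ^ (-ρ)) = -ρ :=
      Real.logb_rpow two_pos (by norm_num)
    constructor
    · intro h
      have heq : ((2:ℝ) ^ (-ρ)) ^ R = β + (1 - β) * (2:ℝ) ^ (-ρ) := by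
        have h2' : Real.logb 2 (((2:ℝ) ^ (-ρ)) ^ R)
            = Real.logb 2 (β + (1 - β) * (2:ℝ) ^ (-ρ)) := by
          rw [Real.logb_rpow_eq_mul_logb_of_pos ht0', hlogt]
          simp only [gallagerE0] at h
          linarith
        exact Real.logb_injOn_pos h12
          (mem_Ioi.2 (Real.rpow_pos_of_pos ht0' _)) (mem_Ioi.2 harg) h2'
      simp only [hφdef]
      rw [heq]; ring
    · intro h
      simp only [hφdef] at h
      have heq : ((2:ℝ) ^ (-ρ)) ^ R = β + (1 - β) * (2:ℝ) ^ (-ρ) := by linarith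
      simp only [gallagerE0]
      rw [← heq, Real.logb_rpow_eq_mul_logb_of_pos ht0', hlogt]
      ring
  -- assemble
  have hlogtneg : Real.logb 2 t < 0 := Real.logb_neg h12 ht0 htIoo.2
  have hρpos : 0 < -Real.logb 2 t := by linarith
  have hback : (2:ℝ) ^ (-(-Real.logb 2 t)) = t := by
    rw [neg_neg]; exact Real.rpow_logb two_pos (by norm_num) ht0
  refine ⟨-Real.logb 2 t, ⟨hρpos, ?_⟩, ?_⟩
  · exact (hequiv _ hρpos).2 (by rw [hback]; exact htzero)
  · rintro ρ' ⟨hρ'pos, hρ'eq⟩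
    have hroot := (hequiv ρ' hρ'pos).1 hρ'eq
    have ht'0 : (0:ℝ) < (2:ℝ) ^ (-ρ') := Real.rpow_pos_of_pos two_pos _
    have ht'1 : (2:ℝ) ^ (-ρ') < 1 :=
      Real.rpow_lt_one_of_one_lt_of_neg h12 (by linarith)
    have := uniq _ ⟨ht'0, ht'1⟩ hroot
    have hlog' : Real.logb 2 ((2:ℝ) ^ (-ρ')) = -ρ' :=
      Real.logb_rpow two_pos (by norm_num)
    rw [this] at hlog'
    linarith
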